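/- Let r be a point on the x-axis and p a point of the plane. For every point t' with t'₁ > p₁ (i.e. t' ∈ H_p^R) satisfying dist(r,t') > dist(r,p) (i.e. t' ∈ H_p^R − D_p(r)), there exists a unique point c on the x-axis with dist(c,p) = dist(c,t'); moreover this c satisfies c₁ > r₁, i.e. the center of the unique circle centered on the x-axis passing through p and t' lies strictly to the right of r. -/

import Mathlib

lemma dist_sq_eq (x y : EuclideanSpace ℝ (Fin 2)) :
    dist x y ^ 2 = (x 0 - y 0) ^ 2 + (x 1 - y 1) ^ 2 := by
  rw [EuclideanSpace.dist_eq, Real.sq_sqrt (by positivity)]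
  simp [Fin.sum_univ_two, Real.dist_eq, sq_abs]

/-- Lemma 1(ii), fourth item: for a point `t'` strictly to the right of `p`
lying outside the closed disk centered at `r` (on the x-axis) through `p`,
there is a unique point `c` on the x-axis equidistant from `p` and `t'`, and it
lies strictly to the right of `r`. -/
theorem unique_center_right_halfplane_outside_disk
    (r p t' : EuclideanSpace ℝ (Fin 2))
    (ht : p 0 < t' 0) (hr : r 1 = 0) (htd : dist r p < dist r t') :
    ∃ c : EuclideanSpace ℝ (Fin 2),
      (c 1 = 0 ∧ dist c p = dist c t' ∧ r 0 < c 0) ∧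
      ∀ c' : EuclideanSpace ℝ (Fin 2),
        c' 1 = 0 → dist c' p = dist c' t' → c' = c := by
  have hden : t' 0 - p 0 > 0 := sub_pos.mpr ht
  have hden' : t' 0 - p 0 ≠ 0 := ne_of_gt hden
  set c0 : ℝ := (t' 0 ^ 2 + t' 1 ^ 2 - p 0 ^ 2 - p 1 ^ 2) / (2 * (t' 0 - p 0)) with hc0
  obtain ⟨c, hcdef⟩ : ∃ c : EuclideanSpace ℝ (Fin 2), c = ![c0, 0] := ⟨WithLp.toLp 2 _, rfl⟩
  have hcx : c 0 = c0 := by rw [hcdef]; rfl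
  have hcy : c 1 = 0 := by rw [hcdef]; rfl
  have hceq : dist c p = dist c t' := by
    have hsq : dist c p ^ 2 = dist c t' ^ 2 := by
      rw [dist_sq_eq, dist_sq_eq, hcx, hcy, hc0]
      field_simp
      ring
    have h1 := dist_nonneg (x := c) (y := p)
    have h2 := dist_nonneg (x := c) (y := t')
    calc dist c p = Real.sqrt (dist c p ^ 2) := (Real.sqrt_sq h1).symm
      _ = Real.sqrt (dist c t' ^ 2) := by rw [hsq]
      _ = dist c t' := Real.sqrt_sq h2
  refine ⟨c, ⟨hcy, hceq, ?_⟩, ?_⟩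
  · have hsq : dist r p ^ 2 < dist r t' ^ 2 := by
      have := dist_nonneg (x := r) (y := p)
      nlinarith
    rw [dist_sq_eq, dist_sq_eq, hr] at hsq
    rw [hcx, hc0, lt_div_iff₀ (by positivity)]
    nlinarith [hsq]
  · intro c' hc1 hdc
    have hsq : dist c' p ^ 2 = dist c' t' ^ 2 := by rw [hdc]
    rw [dist_sq_eq, dist_sq_eq, hc1] at hsq
    have h0 : c' 0 = c 0 := by
      rw [hcx, hc0, eq_div_iff (by positivity)]
      nlinarith [hsq]
    ext i
    fin_cases i
    · exact h0
    · exact hc1.trans hcy.symm
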